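/- Let D ≥ 1, n ≥ 1 with nD even, s ≥ 3D odd, and define a_i := ∑_{k=0}^n a_{i,k} where a_{i,k} are the partial-fraction coefficients of R_n^{(D)}. Then a_i = 0 for every even i, and ∑_{k=0}^n a_{1,k} = 0. -/

import Mathlib

open Finset Polynomial

noncomputable def stmt14Pb (s e n : ℕ) (b : ℕ → ℕ → ℚ) : Polynomial ℚ :=
  ∑ i ∈ Finset.Icc 1 s, ∑ k ∈ Finset.range (n+1),
    Polynomial.C (b i k) * ((Polynomial.X + Polynomial.C (k:ℚ))^(e-i) *
      ∏ k' ∈ (Finset.range (n+1)).erase k, (Polynomial.X + Polynomial.C (k':ℚ))^e)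

lemma stmt14Pb_eval (s e n : ℕ) (b : ℕ → ℕ → ℚ) (t : ℚ) :
    (stmt14Pb s e n b).eval t = ∑ i ∈ Icc 1 s, ∑ k ∈ range (n+1),
      b i k * ((t + k)^(e-i) * ∏ k' ∈ (range (n+1)).erase k, (t + (k':ℚ))^e) := by
  simp [stmt14Pb, eval_finset_sum, eval_prod]

lemma stmt14key (s e n : ℕ) (hse : s ≤ e) (b : ℕ → ℕ → ℚ) (t : ℚ)
    (ht : ∀ k ≤ n, t + (k:ℚ) ≠ 0) :
    (∑ i ∈ Icc 1 s, ∑ k ∈ range (n+1), b i k / (t + k)^i) *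
      ∏ k ∈ range (n+1), (t + (k:ℚ))^e
    = (stmt14Pb s e n b).eval t := by
  rw [stmt14Pb_eval, Finset.sum_mul]
  refine Finset.sum_congr rfl fun i hi => ?_
  rw [Finset.sum_mul]
  refine Finset.sum_congr rfl fun k hk => ?_
  have hkn : k ≤ n := Nat.lt_succ_iff.mp (Finset.mem_range.mp hk)
  have htk : t + (k:ℚ) ≠ 0 := ht k hkn
  have hie : i ≤ e := le_trans (Finset.mem_Icc.mp hi).2 hse
  rw [← Finset.mul_prod_erase _ _ hk, ← pow_sub_mul_pow (t+(k:ℚ)) hie]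
  have hpi : (t + (k:ℚ))^i ≠ 0 := pow_ne_zero _ htk
  field_simp

lemma stmt14inj : Function.Injective (fun m : ℕ => ((m:ℚ)+1)) := by
  intro x y hxy
  have : (x:ℚ) = y := by simpa using hxy
  exact_mod_cast this

lemma stmt14L1 (n : ℕ) : ∀ (s : ℕ) (b : ℕ → ℕ → ℚ),
    (∀ m : ℕ, ∑ i ∈ Icc 1 s, ∑ k ∈ range (n+1), b i k / ((m:ℚ) + 1 + k)^i = 0) →
    ∀ i ∈ Icc 1 s, ∀ k ≤ n, b i k = 0 := by
  intro s
  induction s with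
  | zero => intro b _ i hi; simp at hi
  | succ s IH =>
    intro b hb
    have hP : stmt14Pb (s+1) (s+1) n b = 0 := by
      apply Polynomial.eq_zero_of_infinite_isRoot
      refine Set.infinite_of_injective_forall_mem stmt14inj (fun m => ?_)
      simp only [Set.mem_setOf_eq, IsRoot]
      rw [← stmt14key (s+1) (s+1) n le_rfl b ((m:ℚ)+1)
        (fun k hk => by positivity), hb m, zero_mul]
    have htop : ∀ k ≤ n, b (s+1) k = 0 := by
      intro k0 hk0
      have hk0m : k0 ∈ range (n+1) := mem_range.mpr (Nat.lt_succ_of_le hk0)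
      have h0 : (stmt14Pb (s+1) (s+1) n b).eval (-(k0:ℚ)) = 0 := by rw [hP]; simp
      rw [stmt14Pb_eval] at h0
      have houter : ∀ i ∈ Icc 1 (s+1), i ≠ s+1 →
          ∑ k ∈ range (n+1), b i k * ((-(k0:ℚ) + k)^(s+1-i) *
            ∏ k' ∈ (range (n+1)).erase k, (-(k0:ℚ) + (k':ℚ))^(s+1)) = 0 := by
        intro i hi hine
        apply Finset.sum_eq_zero
        intro k hk
        by_cases hkk : k = k0
        · subst hkk
          have hz : (-(k:ℚ) + k) ^ (s+1-i) = 0 := by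
            rw [neg_add_cancel]
            exact zero_pow (by have := (Finset.mem_Icc.mp hi).2; omega)
          rw [hz]; ring
        · have hk0e : k0 ∈ (range (n+1)).erase k :=
            Finset.mem_erase.mpr ⟨fun h => hkk h.symm, hk0m⟩
          rw [Finset.prod_eq_zero hk0e (by rw [neg_add_cancel]; exact zero_pow (by omega))]
          ring
      have hinner : ∀ k ∈ range (n+1), k ≠ k0 →
          b (s+1) k * ((-(k0:ℚ) + k)^(s+1-(s+1)) *
            ∏ k' ∈ (range (n+1)).erase k, (-(k0:ℚ) + (k':ℚ))^(s+1)) = 0 := by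
        intro k hk hkk0
        have hk0e : k0 ∈ (range (n+1)).erase k :=
          Finset.mem_erase.mpr ⟨fun h => hkk0 h.symm, hk0m⟩
        rw [Finset.prod_eq_zero hk0e (by rw [neg_add_cancel]; exact zero_pow (by omega))]
        ring
      rw [Finset.sum_eq_single (s+1) houter
            (fun h => absurd (Finset.mem_Icc.mpr ⟨by omega, le_refl _⟩) h),
          Finset.sum_eq_single k0 hinner (fun h => absurd hk0m h)] at h0
      simp only [Nat.sub_self, pow_zero, one_mul] at h0
      have hc : ∏ k' ∈ (range (n+1)).erase k0, (-(k0:ℚ) + (k':ℚ))^(s+1) ≠ 0 := by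
        apply Finset.prod_ne_zero_iff.mpr
        intro k' hk'
        have hne : k' ≠ k0 := (Finset.mem_erase.mp hk').1
        have hne' : (k':ℚ) ≠ (k0:ℚ) := by exact_mod_cast hne
        exact pow_ne_zero _ (by intro h; apply hne'; linarith)
      rcases mul_eq_zero.mp h0 with h | h
      · exact h
      · exact absurd h hc
    have hb' : ∀ m : ℕ, ∑ i ∈ Icc 1 s, ∑ k ∈ range (n+1), b i k / ((m:ℚ) + 1 + k)^i = 0 := by
      intro m
      have hbm := hb m
      rw [Finset.sum_Icc_succ_top (by omega)] at hbm
      have hz : ∑ k ∈ range (n+1), b (s+1) k / ((m:ℚ) + 1 + k)^(s+1) = 0 := by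
        apply Finset.sum_eq_zero
        intro k hk
        rw [htop k (Nat.lt_succ_iff.mp (mem_range.mp hk))]; simp
      rw [hz, add_zero] at hbm
      exact hbm
    intro i hi k hk
    rcases Finset.mem_Icc.mp hi with ⟨h1, h2⟩
    by_cases hie : i = s+1
    · subst hie; exact htop k hk
    · exact IH b hb' i (Finset.mem_Icc.mpr ⟨h1, by omega⟩) k hk

theorem stmt14 (D s n : ℕ) (hD : 1 ≤ D) (hn : 1 ≤ n) (hnD : Even (n * D))
    (hs : 3 * D ≤ s) (hsodd : Odd s)
    (a : ℕ → ℕ → ℚ)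
    (ha : ∀ t : ℚ, (∀ j ≤ n, t + (j : ℚ) ≠ 0) →
      (D : ℚ) ^ (6 * (D - 1) * n) * (n.factorial : ℚ) ^ (s - (3 * D - 1)) *
          (∏ j ∈ Finset.range (3 * D * n + 1), (t - n + (j : ℚ) / D)) /
            ∏ j ∈ Finset.range (n + 1), (t + j) ^ (s + 1) =
        ∑ i ∈ Finset.Icc 1 s, ∑ k ∈ Finset.range (n + 1), a i k / (t + k) ^ i) :
    (∀ i ∈ Finset.Icc 1 s, Even i → ∑ k ∈ Finset.range (n + 1), a i k = 0) ∧
      ∑ k ∈ Finset.range (n + 1), a 1 k = 0 := by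
  have hD0 : (D:ℚ) ≠ 0 := by
    have : (0:ℚ) < D := by exact_mod_cast Nat.pos_of_ne_zero (by omega)
    exact ne_of_gt this
  have hs3 : 3 ≤ s := le_trans (by omega) hs
  -- symmetry part
  have hcomb : ∀ m : ℕ, ∑ i ∈ Finset.Icc 1 s, ∑ k ∈ Finset.range (n+1),
      (a i k + (-1:ℚ)^i * a i (n-k)) / ((m:ℚ) + 1 + k)^i = 0 := by
    intro m
    set t : ℚ := (m:ℚ) + 1 with htdef
    have htpos : (0:ℚ) < t := by rw [htdef]; positivity
    have ht : ∀ j ≤ n, t + (j:ℚ) ≠ 0 := by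
      intro j hj
      have : (0:ℚ) ≤ j := Nat.cast_nonneg j
      linarith
    set u : ℚ := -(n:ℚ) - t with hudef
    have hu : ∀ j ≤ n, u + (j:ℚ) ≠ 0 := by
      intro j hj
      have h1 : (j:ℚ) ≤ n := Nat.cast_le.mpr hj
      intro h
      rw [hudef] at h
      linarith
    have h1 := ha t ht
    have h2 := ha u hu
    have heven3 : Even (3*D*n) := by
      have h3 : 3*D*n = 3*(n*D) := by ring
      rw [h3]; exact hnD.mul_left 3
    have hN : (∏ j ∈ Finset.range (3*D*n+1), (u - n + (j:ℚ)/D))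
        = -(∏ j ∈ Finset.range (3*D*n+1), (t - n + (j:ℚ)/D)) := by
      have step1 : (∏ j ∈ Finset.range (3*D*n+1), (u - n + (j:ℚ)/D))
          = ∏ j ∈ Finset.range (3*D*n+1), (-1) * (t - (n:ℚ) + ((3*D*n - j:ℕ):ℚ)/D) := by
        refine Finset.prod_congr rfl fun j hj => ?_
        have hj' : j ≤ 3*D*n := Nat.lt_succ_iff.mp (Finset.mem_range.mp hj)
        rw [Nat.cast_sub hj']
        push_cast
        rw [hudef]
        field_simp
        ring
      rw [step1, Finset.prod_mul_distrib, Finset.prod_const, Finset.card_range]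
      have step2 : ∏ j ∈ Finset.range (3*D*n+1), (t - (n:ℚ) + ((3*D*n - j:ℕ):ℚ)/D)
          = ∏ j ∈ Finset.range (3*D*n+1), (t - (n:ℚ) + (j:ℚ)/D) :=
        Finset.prod_range_reflect (fun j => t - (n:ℚ) + (j:ℚ)/D) (3*D*n+1)
      rw [step2, pow_succ, heven3.neg_one_pow, one_mul, neg_one_mul]
    have hs1even : Even (s+1) := hsodd.add_one
    have hDen : (∏ j ∈ Finset.range (n+1), (u + (j:ℚ))^(s+1))
        = ∏ j ∈ Finset.range (n+1), (t + (j:ℚ))^(s+1) := by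
      have step1 : (∏ j ∈ Finset.range (n+1), (u + (j:ℚ))^(s+1))
          = ∏ j ∈ Finset.range (n+1), (t + ((n - j:ℕ):ℚ))^(s+1) := by
        refine Finset.prod_congr rfl fun j hj => ?_
        have hj' : j ≤ n := Nat.lt_succ_iff.mp (Finset.mem_range.mp hj)
        rw [Nat.cast_sub hj']
        rw [show u + (j:ℚ) = -(t + ((n:ℚ) - j)) by rw [hudef]; ring]
        exact hs1even.neg_pow _
      rw [step1]
      exact Finset.prod_range_reflect (fun j => (t + (j:ℚ))^(s+1)) (n+1)
    have hsum0 : (∑ i ∈ Finset.Icc 1 s, ∑ k ∈ Finset.range (n+1), a i k / (t + k)^i)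
        + (∑ i ∈ Finset.Icc 1 s, ∑ k ∈ Finset.range (n+1), a i k / (u + k)^i) = 0 := by
      rw [← h1, ← h2, hN, hDen]
      ring
    have hSu : (∑ i ∈ Finset.Icc 1 s, ∑ k ∈ Finset.range (n+1), a i k / (u + k)^i)
        = ∑ i ∈ Finset.Icc 1 s, ∑ k ∈ Finset.range (n+1),
            ((-1:ℚ)^i * a i (n-k)) / (t + (k:ℚ))^i := by
      refine Finset.sum_congr rfl fun i _ => ?_
      have step1 : ∑ k ∈ Finset.range (n+1), a i k / (u + k)^i
          = ∑ k ∈ Finset.range (n+1), ((-1:ℚ)^i * a i k) / (t + ((n - k:ℕ):ℚ))^i := by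
        refine Finset.sum_congr rfl fun k hk => ?_
        have hk' : k ≤ n := Nat.lt_succ_iff.mp (Finset.mem_range.mp hk)
        rw [Nat.cast_sub hk']
        rw [show u + (k:ℚ) = -(t + ((n:ℚ) - k)) by rw [hudef]; ring, neg_pow]
        rcases Nat.even_or_odd i with h | h
        · rw [h.neg_one_pow]; ring
        · rw [h.neg_one_pow]
          rw [neg_one_mul, div_neg, neg_one_mul, neg_div]
      rw [step1]
      rw [← Finset.sum_range_reflect
        (fun k => ((-1:ℚ)^i * a i (n-k)) / (t + (k:ℚ))^i) (n+1)]
      refine Finset.sum_congr rfl fun k hk => ?_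
      have hk' : k ≤ n := Nat.lt_succ_iff.mp (Finset.mem_range.mp hk)
      simp only [Nat.add_sub_cancel]
      rw [Nat.sub_sub_self hk']
    rw [hSu] at hsum0
    rw [← hsum0, ← Finset.sum_add_distrib]
    refine Finset.sum_congr rfl fun i _ => ?_
    rw [← Finset.sum_add_distrib]
    refine Finset.sum_congr rfl fun k _ => ?_
    rw [add_div]
  have hball := stmt14L1 n s (fun i k => a i k + (-1:ℚ)^i * a i (n-k)) hcomb
  constructor
  · intro i hi hieven
    have h5 : ∀ k ≤ n, a i k = - a i (n-k) := by
      intro k hk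
      have hbik := hball i hi k hk
      rw [hieven.neg_one_pow, one_mul] at hbik
      linarith
    have h6 : ∑ k ∈ Finset.range (n+1), a i k = - ∑ k ∈ Finset.range (n+1), a i k := by
      calc ∑ k ∈ Finset.range (n+1), a i k
          = ∑ k ∈ Finset.range (n+1), -(a i (n-k)) :=
            Finset.sum_congr rfl fun k hk =>
              h5 k (Nat.lt_succ_iff.mp (Finset.mem_range.mp hk))
        _ = - ∑ k ∈ Finset.range (n+1), a i (n-k) := Finset.sum_neg_distrib _
        _ = - ∑ k ∈ Finset.range (n+1), a i k :=
            congrArg Neg.neg (Finset.sum_range_reflect (fun k => a i k) (n+1))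
    linarith
  · -- degree-count part
    set c : ℚ := (D : ℚ) ^ (6 * (D - 1) * n) * (n.factorial : ℚ) ^ (s - (3 * D - 1)) with hcdef
    set M := (n+1)*(s+1) with hMdef
    have hMexp : M = n*(s+1) + s + 1 := by rw [hMdef]; ring
    have hpoly : Polynomial.C c * (∏ j ∈ Finset.range (3*D*n+1),
        (Polynomial.X - Polynomial.C (n:ℚ) + Polynomial.C ((j:ℚ)/D)))
        = stmt14Pb s (s+1) n a := by
      rw [← sub_eq_zero]
      apply Polynomial.eq_zero_of_infinite_isRoot
      refine Set.infinite_of_injective_forall_mem stmt14inj (fun m => ?_)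
      simp only [Set.mem_setOf_eq, IsRoot]
      set t : ℚ := (m:ℚ) + 1 with htdef
      have htpos : (0:ℚ) < t := by rw [htdef]; positivity
      have ht : ∀ j ≤ n, t + (j:ℚ) ≠ 0 := by
        intro j hj
        have : (0:ℚ) ≤ j := Nat.cast_nonneg j
        linarith
      have h1 := ha t ht
      have hDt : (∏ j ∈ Finset.range (n+1), (t + (j:ℚ))^(s+1)) ≠ 0 := by
        apply Finset.prod_ne_zero_iff.mpr
        intro j hj
        exact pow_ne_zero _ (ht j (Nat.lt_succ_iff.mp (Finset.mem_range.mp hj)))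
      rw [div_eq_iff hDt] at h1
      rw [Polynomial.eval_sub, sub_eq_zero, Polynomial.eval_mul, Polynomial.eval_C,
        Polynomial.eval_prod]
      simp only [Polynomial.eval_add, Polynomial.eval_sub, Polynomial.eval_X,
        Polynomial.eval_C]
      rw [← stmt14key s (s+1) n (Nat.le_succ s) a t ht]
      exact h1
    have hcoeffL : (Polynomial.C c * (∏ j ∈ Finset.range (3*D*n+1),
        (Polynomial.X - Polynomial.C (n:ℚ) + Polynomial.C ((j:ℚ)/D)))).coeff (M-1) = 0 := by
      apply Polynomial.coeff_eq_zero_of_natDegree_lt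
      have hd1 : (Polynomial.C c * (∏ j ∈ Finset.range (3*D*n+1),
          (Polynomial.X - Polynomial.C (n:ℚ) + Polynomial.C ((j:ℚ)/D)))).natDegree
          ≤ 3*D*n+1 := by
        refine le_trans Polynomial.natDegree_mul_le ?_
        rw [Polynomial.natDegree_C, zero_add]
        refine le_trans (Polynomial.natDegree_prod_le _ _) (le_of_eq ?_)
        have heach1 : ∀ j ∈ Finset.range (3*D*n+1),
            (Polynomial.X - Polynomial.C (n:ℚ) + Polynomial.C ((j:ℚ)/D)).natDegree = 1 := by
          intro j _
          have hEq : Polynomial.X - Polynomial.C (n:ℚ) + Polynomial.C ((j:ℚ)/D)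
              = Polynomial.X + Polynomial.C ((j:ℚ)/D - n) := by
            rw [map_sub]; ring
          rw [hEq, Polynomial.natDegree_X_add_C]
        rw [Finset.sum_congr rfl heach1, Finset.sum_const, Finset.card_range,
          smul_eq_mul, mul_one]
      have hMlb : 3*D*n + n + 3*D + 1 ≤ M := by
        have e1 : (n+1)*(3*D+1) = 3*D*n + n + 3*D + 1 := by ring
        have e2 : (n+1)*(3*D+1) ≤ (n+1)*(s+1) := Nat.mul_le_mul_left _ (by omega)
        omega
      omega
    have hcoeffR : (stmt14Pb s (s+1) n a).coeff (M-1)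
        = ∑ k ∈ Finset.range (n+1), a 1 k := by
      rw [stmt14Pb, Polynomial.finset_sum_coeff]
      have houter : ∀ i ∈ Finset.Icc 1 s, i ≠ 1 →
          (∑ k ∈ Finset.range (n+1), Polynomial.C (a i k) *
            ((Polynomial.X + Polynomial.C (k:ℚ))^(s+1-i) *
              ∏ k' ∈ (Finset.range (n+1)).erase k,
                (Polynomial.X + Polynomial.C (k':ℚ))^(s+1))).coeff (M-1) = 0 := by
        intro i hi hine
        rw [Polynomial.finset_sum_coeff]
        apply Finset.sum_eq_zero
        intro k hk
        apply Polynomial.coeff_eq_zero_of_natDegree_lt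
        have hdeg : (Polynomial.C (a i k) * ((Polynomial.X + Polynomial.C (k:ℚ))^(s+1-i) *
            ∏ k' ∈ (Finset.range (n+1)).erase k,
              (Polynomial.X + Polynomial.C (k':ℚ))^(s+1))).natDegree
            ≤ (s+1-i) + n*(s+1) := by
          refine le_trans Polynomial.natDegree_mul_le ?_
          rw [Polynomial.natDegree_C, zero_add]
          refine le_trans Polynomial.natDegree_mul_le ?_
          have hp1 : ((Polynomial.X + Polynomial.C (k:ℚ))^(s+1-i)).natDegree ≤ s+1-i := by
            refine le_trans Polynomial.natDegree_pow_le ?_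
            rw [Polynomial.natDegree_X_add_C, mul_one]
          have hp2 : (∏ k' ∈ (Finset.range (n+1)).erase k,
              (Polynomial.X + Polynomial.C (k':ℚ))^(s+1)).natDegree ≤ n*(s+1) := by
            refine le_trans (Polynomial.natDegree_prod_le _ _) (le_of_eq ?_)
            have heach : ∀ k' ∈ (Finset.range (n+1)).erase k,
                ((Polynomial.X + Polynomial.C ((k':ℕ):ℚ))^(s+1)).natDegree = s+1 :=
              fun k' _ => by
                rw [Polynomial.natDegree_pow, Polynomial.natDegree_X_add_C, mul_one]
            rw [Finset.sum_congr rfl heach, Finset.sum_const,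
              Finset.card_erase_of_mem hk, Finset.card_range, Nat.add_sub_cancel,
              smul_eq_mul]
          omega
        have hilb : 2 ≤ i := by
          rcases Finset.mem_Icc.mp hi with ⟨hi1, _⟩
          omega
        have hiub : i ≤ s := (Finset.mem_Icc.mp hi).2
        omega
      rw [Finset.sum_eq_single 1 houter
        (fun h => absurd (Finset.mem_Icc.mpr ⟨le_refl _, by omega⟩) h)]
      rw [Polynomial.finset_sum_coeff]
      refine Finset.sum_congr rfl fun k hk => ?_
      rw [Polynomial.coeff_C_mul]
      have hmon : ((Polynomial.X + Polynomial.C (k:ℚ))^(s+1-1) *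
          ∏ k' ∈ (Finset.range (n+1)).erase k,
            (Polynomial.X + Polynomial.C (k':ℚ))^(s+1)).Monic :=
        ((Polynomial.monic_X_add_C _).pow _).mul
          (Polynomial.monic_prod_of_monic _ _ fun k' _ => (Polynomial.monic_X_add_C _).pow _)
      have hdeg : ((Polynomial.X + Polynomial.C (k:ℚ))^(s+1-1) *
          ∏ k' ∈ (Finset.range (n+1)).erase k,
            (Polynomial.X + Polynomial.C (k':ℚ))^(s+1)).natDegree = M - 1 := by
        rw [Polynomial.Monic.natDegree_mul ((Polynomial.monic_X_add_C _).pow _)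
          (Polynomial.monic_prod_of_monic _ _ fun k' _ => (Polynomial.monic_X_add_C _).pow _)]
        rw [Polynomial.natDegree_pow, Polynomial.natDegree_X_add_C, mul_one]
        rw [Polynomial.natDegree_prod _ _
          (fun k' _ => (((Polynomial.monic_X_add_C _).pow _)).ne_zero)]
        have : ∑ k' ∈ (Finset.range (n+1)).erase k,
            ((Polynomial.X + Polynomial.C ((k':ℕ):ℚ))^(s+1)).natDegree = n*(s+1) := by
          have heach : ∀ k' ∈ (Finset.range (n+1)).erase k,
              ((Polynomial.X + Polynomial.C ((k':ℕ):ℚ))^(s+1)).natDegree = s+1 := by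
            intro k' _
            rw [Polynomial.natDegree_pow, Polynomial.natDegree_X_add_C, mul_one]
          rw [Finset.sum_congr rfl heach, Finset.sum_const,
            Finset.card_erase_of_mem hk, Finset.card_range]
          simp [Nat.add_sub_cancel]
        rw [this]
        omega
      rw [← hdeg, Polynomial.Monic.coeff_natDegree hmon, mul_one]
    have := congrArg (fun p => Polynomial.coeff p (M-1)) hpoly
    rw [hcoeffL, hcoeffR] at this
    exact this.symm
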